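/- arXiv:2310.12457 — 3 statements merged into one kernel-verified Lean document; each statement's English description precedes it below -/
import Mathlib

section
/- Let G=(V,E) be a graph with n nodes and let m subgraphs (V_1,E_1),...,(V_m,E_m) be sampled independently such that for all s and all nodes u,v, Pr[v∈V_s] = Pr[v∈V_s | u∈V_s] = p, and (i,j)∈E_s iff i∈V_s, j∈V_s, and (i,j)∈E. Define the full-graph energy ℓ(M) = ‖M−F‖_F² + pλ·tr(MᵀLM) + Σ_{i=1}^n ζ(M_i) where L is the graph Laplacian of G and F = f(X;W) is a fixed matrix, and the sampled energy ℓ_muse(M) = Σ_{s=1}^m [ Σ_{v∈V_s}(‖M_v − F_v‖² + ζ(M_v)) + (λ/2)Σ_{(i,j)∈E_s}‖M_i − M_j‖² ]. Then E[ℓ_muse(M)] = m·p·ℓ(M). -/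
open MeasureTheory Finset Matrix

/-- Squared Frobenius norm of a matrix. -/
noncomputable def frobSq {n d : ℕ} (M : Matrix (Fin n) (Fin d) ℝ) : ℝ :=
  ∑ i, ∑ k, (M i k) ^ 2

/-- Squared Euclidean norm of a row vector. -/
noncomputable def rowSq {d : ℕ} (x : Fin d → ℝ) : ℝ := ∑ k, x k ^ 2

lemma ite_eq_indicator {Ω : Type} (P : Ω → Prop) [DecidablePred P] (c : ℝ) :
    (fun ω => if P ω then c else 0) = Set.indicator {ω | P ω} (fun _ => c) := by
  ext ω; by_cases h : P ω <;> simp [Set.indicator_apply, Set.mem_setOf_eq, h]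

lemma int_ite {Ω : Type} [MeasurableSpace Ω] (μ : Measure Ω) [IsFiniteMeasure μ]
    (P : Ω → Prop) [DecidablePred P] (hA : MeasurableSet {ω | P ω}) (c : ℝ) :
    ∫ ω, (if P ω then c else 0) ∂μ = (μ {ω | P ω}).toReal * c := by
  rw [ite_eq_indicator P c, integral_indicator_const _ hA]; simp [smul_eq_mul, measureReal_def]

lemma intg_ite {Ω : Type} [MeasurableSpace Ω] (μ : Measure Ω) [IsFiniteMeasure μ]
    (P : Ω → Prop) [DecidablePred P] (hA : MeasurableSet {ω | P ω}) (c : ℝ) :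
    Integrable (fun ω => if P ω then c else 0) μ := by
  rw [ite_eq_indicator P c]
  exact (integrable_const c).indicator hA

lemma trace_lap {n d : ℕ} (G : SimpleGraph (Fin n)) [DecidableRel G.Adj]
    (M : Matrix (Fin n) (Fin d) ℝ) :
    (Mᵀ * (Matrix.diagonal (fun v => (G.degree v : ℝ)) - G.adjMatrix ℝ) * M).trace
      = (1/2) * ∑ i, ∑ j, (if G.Adj i j then rowSq (M i - M j) else 0) := by
  classical
  set inn : Fin n → Fin n → ℝ := fun i j => ∑ k, M i k * M j k with hinn
  have hdeg : ∀ i, ∑ j, (if G.Adj i j then (1:ℝ) else 0) = (G.degree i : ℝ) := by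
    intro i
    rw [Finset.sum_boole]
    congr 1
    rw [SimpleGraph.degree, ← SimpleGraph.neighborFinset_eq_filter]
  have hLHS : (Mᵀ * (Matrix.diagonal (fun v => (G.degree v : ℝ)) - G.adjMatrix ℝ) * M).trace
      = ∑ i, (G.degree i : ℝ) * inn i i - ∑ i, ∑ j, (if G.Adj i j then inn i j else 0) := by
    rw [Matrix.trace_mul_cycle]
    simp only [Matrix.trace, Matrix.diag_apply, Matrix.mul_apply, Matrix.sub_apply,
      Matrix.diagonal_apply, SimpleGraph.adjMatrix_apply, Matrix.transpose_apply]
    simp only [mul_sub, Finset.sum_sub_distrib]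
    congr 1
    · apply Finset.sum_congr rfl; intro x _
      simp [mul_ite, Finset.sum_ite_eq, mul_comm, hinn]
    · apply Finset.sum_congr rfl; intro x _
      apply Finset.sum_congr rfl; intro j _
      simp only [G.adj_comm j x]
      by_cases h : G.Adj x j <;> simp [h, hinn]
  have hsq : ∀ i j : Fin n, rowSq (M i - M j) = inn i i + inn j j - 2 * inn i j := by
    intro i j
    simp only [rowSq, hinn, Pi.sub_apply, Finset.mul_sum]
    rw [← Finset.sum_add_distrib, ← Finset.sum_sub_distrib]
    exact Finset.sum_congr rfl fun k _ => by ring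
  have hA : ∀ i, ∑ j, (if G.Adj i j then inn i i else 0) = (G.degree i : ℝ) * inn i i := by
    intro i
    rw [← hdeg i, Finset.sum_mul]
    exact (Finset.sum_congr rfl fun j _ => by by_cases h : G.Adj i j <;> simp [h]).symm
  have hB : ∑ i, ∑ j, (if G.Adj i j then inn j j else 0) = ∑ i, (G.degree i : ℝ) * inn i i := by
    rw [Finset.sum_comm]
    apply Finset.sum_congr rfl; intro j _
    rw [← hA j]
    exact Finset.sum_congr rfl fun i _ => if_congr (G.adj_comm i j) rfl rfl
  have hR : ∑ i, ∑ j, (if G.Adj i j then rowSq (M i - M j) else 0)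
      = (∑ i, (G.degree i : ℝ) * inn i i) + (∑ i, (G.degree i : ℝ) * inn i i)
        - 2 * ∑ i, ∑ j, (if G.Adj i j then inn i j else 0) := by
    have h2 : ∀ i, ∑ j, (if G.Adj i j then rowSq (M i - M j) else 0)
        = (∑ j, (if G.Adj i j then inn i i else 0)) + (∑ j, (if G.Adj i j then inn j j else 0))
          - 2 * ∑ j, (if G.Adj i j then inn i j else 0) := by
      intro i
      rw [Finset.mul_sum, ← Finset.sum_add_distrib, ← Finset.sum_sub_distrib]
      exact Finset.sum_congr rfl fun j _ => by
        by_cases h : G.Adj i j <;> simp [h, hsq]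
    calc ∑ i, ∑ j, (if G.Adj i j then rowSq (M i - M j) else 0)
        = ∑ i, ((∑ j, (if G.Adj i j then inn i i else 0))
            + (∑ j, (if G.Adj i j then inn j j else 0))
            - 2 * ∑ j, (if G.Adj i j then inn i j else 0)) := Finset.sum_congr rfl fun i _ => h2 i
      _ = _ := by
          rw [Finset.sum_sub_distrib, Finset.sum_add_distrib, ← Finset.mul_sum,
            Finset.sum_congr rfl fun i _ => hA i, hB]
  rw [hLHS, hR]; ring

/-- expectation of the sampled energy equals `m·p` times the
full-graph energy (with `λ` rescaled to `p·λ`). -/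
theorem stmt0
    {n m d : ℕ} (G : SimpleGraph (Fin n)) [DecidableRel G.Adj]
    {Ω : Type} [MeasurableSpace Ω] (μ : Measure Ω) [IsProbabilityMeasure μ]
    (Vs : Fin m → Ω → Finset (Fin n))
    (p lam : ℝ) (hp : 0 ≤ p) (hlam : 0 < lam)
    (hmeas : ∀ s v, MeasurableSet {ω | v ∈ Vs s ω})
    -- marginal probability of each node being sampled is p
    (hmarg : ∀ s v, (μ {ω | v ∈ Vs s ω}).toReal = p)
    -- conditional probability Pr[v ∈ V_s | u ∈ V_s] = p, i.e. joint = p·marginal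
    (hcond : ∀ s (u v : Fin n), u ≠ v →
      (μ ({ω | v ∈ Vs s ω} ∩ {ω | u ∈ Vs s ω})).toReal
        = p * (μ {ω | u ∈ Vs s ω}).toReal)
    (M F : Matrix (Fin n) (Fin d) ℝ) (ζ : (Fin d → ℝ) → ℝ)
    -- L is the graph Laplacian D - A of G
    (L : Matrix (Fin n) (Fin n) ℝ)
    (hL : L = Matrix.diagonal (fun v => (G.degree v : ℝ)) - G.adjMatrix ℝ)
    -- full-graph energy, with λ rescaled to p·λ
    (ℓ : ℝ)
    (hℓ : ℓ = frobSq (M - F) + p * lam * (Mᵀ * L * M).trace + ∑ v, ζ (M v))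
    -- sampled energy with induced edges
    (ℓmuse : Ω → ℝ)
    (hmuse : ∀ ω, ℓmuse ω = ∑ s : Fin m,
      ((∑ v ∈ Vs s ω, (rowSq (M v - F v) + ζ (M v)))
        + (lam / 2) * ∑ i, ∑ j,
            (if G.Adj i j ∧ i ∈ Vs s ω ∧ j ∈ Vs s ω
              then rowSq (M i - M j) else 0))) :
    ∫ ω, ℓmuse ω ∂μ = m * p * ℓ := by
  classical
  set g1 : Fin n → ℝ := fun v => rowSq (M v - F v) + ζ (M v) with hg1
  set f1 : Fin m → Fin n → Ω → ℝ := fun s v ω => if v ∈ Vs s ω then g1 v else 0 with hf1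
  set f2 : Fin m → Fin n → Fin n → Ω → ℝ := fun s i j ω =>
    if G.Adj i j ∧ i ∈ Vs s ω ∧ j ∈ Vs s ω then rowSq (M i - M j) else 0 with hf2
  have hrw : ∀ ω, ℓmuse ω = ∑ s : Fin m,
      ((∑ v : Fin n, f1 s v ω) + (lam/2) * ∑ i, ∑ j, f2 s i j ω) := by
    intro ω
    rw [hmuse ω]
    apply Finset.sum_congr rfl; intro s _
    congr 1
    rw [Finset.sum_ite_mem, Finset.univ_inter]
  have hint1 : ∀ s v, Integrable (f1 s v) μ := fun s v =>
    intg_ite μ (fun ω => v ∈ Vs s ω) (hmeas s v) (g1 v)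
  have hint2 : ∀ s i j, Integrable (f2 s i j) μ := by
    intro s i j
    by_cases h : G.Adj i j
    · have : f2 s i j = fun ω =>
          if i ∈ Vs s ω ∧ j ∈ Vs s ω then rowSq (M i - M j) else 0 := by
        ext ω; simp [hf2, h]
      rw [this]
      have hm : MeasurableSet {ω | i ∈ Vs s ω ∧ j ∈ Vs s ω} :=
        (hmeas s i).inter (hmeas s j)
      exact intg_ite μ _ hm _
    · have : f2 s i j = fun _ => 0 := by ext ω; simp [hf2, h]
      rw [this]; exact integrable_const 0
  have hI1 : ∀ s v, ∫ ω, f1 s v ω ∂μ = p * g1 v := by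
    intro s v
    rw [hf1]
    rw [int_ite μ (fun ω => v ∈ Vs s ω) (hmeas s v) (g1 v), hmarg]
  have hI2 : ∀ s i j, ∫ ω, f2 s i j ω ∂μ
      = if G.Adj i j then p^2 * rowSq (M i - M j) else 0 := by
    intro s i j
    by_cases h : G.Adj i j
    · have hij : f2 s i j = fun ω =>
          if i ∈ Vs s ω ∧ j ∈ Vs s ω then rowSq (M i - M j) else 0 := by
        ext ω; simp [hf2, h]
      have hm : MeasurableSet {ω | i ∈ Vs s ω ∧ j ∈ Vs s ω} :=
        (hmeas s i).inter (hmeas s j)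
      rw [hij, int_ite μ _ hm _, if_pos h]
      have hset : {ω | i ∈ Vs s ω ∧ j ∈ Vs s ω}
          = {ω | j ∈ Vs s ω} ∩ {ω | i ∈ Vs s ω} := by
        ext ω; simp [and_comm]
      rw [hset, hcond s i j h.ne, hmarg]
      ring
    · have : f2 s i j = fun _ => 0 := by ext ω; simp [hf2, h]
      rw [this, if_neg h]
      simp
  set Fs : Fin m → Ω → ℝ := fun s ω =>
    (∑ v : Fin n, f1 s v ω) + (lam/2) * ∑ i, ∑ j, f2 s i j ω with hFs
  have hintFs : ∀ s, Integrable (Fs s) μ := by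
    intro s
    apply Integrable.add
    · exact integrable_finset_sum _ fun v _ => hint1 s v
    · exact (integrable_finset_sum _ fun i _ =>
        integrable_finset_sum _ fun j _ => hint2 s i j).const_mul _
  have hIFs : ∀ s, ∫ ω, Fs s ω ∂μ
      = p * (∑ v, g1 v)
        + (lam/2) * (p^2 * ∑ i, ∑ j, (if G.Adj i j then rowSq (M i - M j) else 0)) := by
    intro s
    rw [hFs]
    rw [integral_add (integrable_finset_sum _ fun v _ => hint1 s v)
      ((integrable_finset_sum _ fun i _ =>
        integrable_finset_sum _ fun j _ => hint2 s i j).const_mul _)]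
    congr 1
    · rw [integral_finset_sum _ fun v _ => hint1 s v, Finset.mul_sum]
      exact Finset.sum_congr rfl fun v _ => hI1 s v
    · rw [integral_const_mul, integral_finset_sum _ fun i _ =>
        integrable_finset_sum _ fun j _ => hint2 s i j]
      congr 1
      rw [Finset.mul_sum]
      apply Finset.sum_congr rfl; intro i _
      rw [integral_finset_sum _ fun j _ => hint2 s i j, Finset.mul_sum]
      apply Finset.sum_congr rfl; intro j _
      rw [hI2 s i j]
      by_cases h : G.Adj i j <;> simp [h]
  have hmain : ∫ ω, ℓmuse ω ∂μ = ∑ s : Fin m, ∫ ω, Fs s ω ∂μ := by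
    rw [integral_congr_ae (Filter.Eventually.of_forall hrw)]
    exact integral_finset_sum _ fun s _ => hintFs s
  rw [hmain]
  simp only [hIFs, Finset.sum_const, Finset.card_univ, Fintype.card_fin, nsmul_eq_mul]
  have htr : (Mᵀ * L * M).trace
      = (1/2) * ∑ i, ∑ j, (if G.Adj i j then rowSq (M i - M j) else 0) := by
    rw [hL]
    exact trace_lap G M
  have hg1sum : ∑ v, g1 v = frobSq (M - F) + ∑ v, ζ (M v) := by
    rw [hg1, Finset.sum_add_distrib]
    congr 1
  rw [hℓ, htr, hg1sum]
  ring
end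

section
/- (Four-point property) With ℓ_muse(𝐘, M) = Σ_s [‖Y_s − F_s‖_F² + λ·tr(Y_sᵀL_sY_s) + γ‖Y_s − μ_s‖_F²] and with M^{(k)} the exact mean minimizer given 𝐘^{(k)} (so that Σ_s⟨μ_s − μ_s^{(k)}, μ_s^{(k)} − Y_s^{(k)}⟩ = 0 for every M), it holds for all 𝐘 and all M that (1+γ)Σ_s‖Y_s − Y_s^{(k)}‖_F² ≥ ℓ_muse(𝐘, M^{(k)}) − ℓ_muse(𝐘, M). Equivalently, the stronger inequality Σ_s‖Y_s − Y_s^{(k)}‖_F² ≥ Σ_s(‖Y_s − μ_s^{(k)}‖_F² − ‖Y_s − μ_s‖_F²) holds. -/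
open Finset

/-- four-point property: with `M^{(k)}` the exact nodewise-mean
minimizer given `𝐘^{(k)}`, for all `𝐘` and all `M`,
`(1+γ)Σ_s‖Y_s − Y_s^{(k)}‖² ≥ ℓ_muse(𝐘, M^{(k)}) − ℓ_muse(𝐘, M)`, and the
stronger inequality `Σ_s‖Y_s − Y_s^{(k)}‖² ≥ Σ_s(‖Y_s − μ_s^{(k)}‖² − ‖Y_s − μ_s‖²)`. -/
theorem stmt8 {m n d : ℕ} (ns : Fin m → ℕ)
    (I : (s : Fin m) → Fin (ns s) → Fin n)
    (Fs : (s : Fin m) → Fin (ns s) → Fin d → ℝ)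
    (Ls : (s : Fin m) → Matrix (Fin (ns s)) (Fin (ns s)) ℝ)
    (hLs : ∀ s, (Ls s).PosSemidef)
    (lam γ : ℝ) (hlam : 0 < lam) (hγ : 0 ≤ γ)
    (ℓ : ((s : Fin m) → Fin (ns s) → Fin d → ℝ) → (Fin n → Fin d → ℝ) → ℝ)
    (hℓ : ∀ Y M, ℓ Y M = ∑ s,
      ((∑ i, rowSq (Y s i - Fs s i))
        + lam * (∑ i, ∑ j, Ls s i j * ∑ k, Y s i k * Y s j k)
        + γ * ∑ i, rowSq (Y s i - M (I s i))))
    (Yk : (s : Fin m) → Fin (ns s) → Fin d → ℝ)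
    (r : Fin n → ℕ)
    (hr : ∀ v, r v = ∑ s, ({i | I s i = v} : Finset (Fin (ns s))).card)
    (Mk : Fin n → Fin d → ℝ)
    (hMk : ∀ v, Mk v
        = (r v : ℝ)⁻¹ • ∑ s, ∑ i ∈ ({i | I s i = v} : Finset (Fin (ns s))), Yk s i) :
    ∀ (Y : (s : Fin m) → Fin (ns s) → Fin d → ℝ) (M : Fin n → Fin d → ℝ),
      ((1 + γ) * ∑ s, ∑ i, rowSq (Y s i - Yk s i) ≥ ℓ Y Mk - ℓ Y M)
      ∧ (∑ s, ∑ i, rowSq (Y s i - Yk s i)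
          ≥ ∑ s, ((∑ i, rowSq (Y s i - Mk (I s i)))
              - ∑ i, rowSq (Y s i - M (I s i)))) := by

  intro Y M
  -- orthogonality from the mean property
  have ortho : ∀ c : Fin n → Fin d → ℝ,
      ∑ s, ∑ i, ∑ k, c (I s i) k * (Mk (I s i) k - Yk s i k) = 0 := by
    intro c
    have hfib : ∀ s : Fin m, ∑ i, ∑ k, c (I s i) k * (Mk (I s i) k - Yk s i k)
        = ∑ v, ∑ i ∈ ({i | I s i = v} : Finset (Fin (ns s))),
            ∑ k, c v k * (Mk v k - Yk s i k) := by
      intro s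
      rw [← Finset.sum_fiberwise Finset.univ (fun i => I s i)
          (fun i => ∑ k, c (I s i) k * (Mk (I s i) k - Yk s i k))]
      refine Finset.sum_congr rfl fun v _ => Finset.sum_congr rfl fun i hi => ?_
      have hiv : I s i = v := by simpa using hi
      rw [hiv]
    simp only [hfib]
    rw [Finset.sum_comm]
    refine Finset.sum_eq_zero fun v _ => ?_
    have hzero : ∀ k : Fin d,
        ∑ s, ∑ i ∈ ({i | I s i = v} : Finset (Fin (ns s))), (Mk v k - Yk s i k) = 0 := by
      intro k
      rcases eq_or_ne (r v) 0 with h0 | h0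
      · have hemp : ∀ s : Fin m, ({i | I s i = v} : Finset (Fin (ns s))) = ∅ := by
          intro s
          have := (hr v) ▸ h0
          have hc : ({i | I s i = v} : Finset (Fin (ns s))).card = 0 := by
            have := Finset.sum_eq_zero_iff.mp this.symm.symm
            exact this s (Finset.mem_univ s)
          exact Finset.card_eq_zero.mp hc
        simp [hemp]
      · have hMkvk : Mk v k
            = (r v : ℝ)⁻¹ * ∑ s, ∑ i ∈ ({i | I s i = v} : Finset (Fin (ns s))), Yk s i k := by
          rw [hMk v]
          simp [Finset.sum_apply]
        have hcard : ∑ s, (((({i | I s i = v} : Finset (Fin (ns s))).card : ℝ)) * Mk v k)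
            = (r v : ℝ) * Mk v k := by
          rw [← Finset.sum_mul, hr v]
          push_cast
          ring
        calc ∑ s, ∑ i ∈ ({i | I s i = v} : Finset (Fin (ns s))), (Mk v k - Yk s i k)
            = ∑ s, ((((({i | I s i = v} : Finset (Fin (ns s))).card : ℝ)) * Mk v k)
                - ∑ i ∈ ({i | I s i = v} : Finset (Fin (ns s))), Yk s i k) := by
              refine Finset.sum_congr rfl fun s _ => ?_
              rw [Finset.sum_sub_distrib, Finset.sum_const, nsmul_eq_mul]
          _ = (∑ s, ((((({i | I s i = v} : Finset (Fin (ns s))).card : ℝ)) * Mk v k)))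
                - ∑ s, ∑ i ∈ ({i | I s i = v} : Finset (Fin (ns s))), Yk s i k := by
              rw [Finset.sum_sub_distrib]
          _ = 0 := by
              rw [hcard, hMkvk]
              field_simp
              ring
    have hswap : ∑ s, ∑ i ∈ ({i | I s i = v} : Finset (Fin (ns s))),
          ∑ k, c v k * (Mk v k - Yk s i k)
        = ∑ k, c v k * ∑ s, ∑ i ∈ ({i | I s i = v} : Finset (Fin (ns s))),
            (Mk v k - Yk s i k) := by
      simp_rw [Finset.mul_sum]
      rw [show (∑ s, ∑ i ∈ ({i | I s i = v} : Finset (Fin (ns s))),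
            ∑ k, c v k * (Mk v k - Yk s i k))
          = ∑ s, ∑ k, ∑ i ∈ ({i | I s i = v} : Finset (Fin (ns s))),
            c v k * (Mk v k - Yk s i k) from
          Finset.sum_congr rfl fun s _ => Finset.sum_comm]
      exact Finset.sum_comm
    rw [hswap]
    exact Finset.sum_eq_zero fun k _ => by rw [hzero k, mul_zero]
  -- pointwise algebraic expansion
  have hsi : ∀ s i, rowSq (Y s i - Yk s i)
      = rowSq (Y s i - Mk (I s i)) - rowSq (Y s i - M (I s i))
        + ∑ k, ((Y s i k - M (I s i) k + (Mk (I s i) k - Yk s i k)) ^ 2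
            + 2 * ((M (I s i) k - Mk (I s i) k) * (Mk (I s i) k - Yk s i k))) := by
    intro s i
    simp only [rowSq, Pi.sub_apply, ← Finset.sum_sub_distrib, ← Finset.sum_add_distrib]
    exact Finset.sum_congr rfl fun k _ => by ring
  have total : ∑ s, ∑ i, rowSq (Y s i - Yk s i)
      = (∑ s, ((∑ i, rowSq (Y s i - Mk (I s i))) - ∑ i, rowSq (Y s i - M (I s i))))
        + (∑ s, ∑ i, ∑ k, (Y s i k - M (I s i) k + (Mk (I s i) k - Yk s i k)) ^ 2)
        + 2 * ∑ s, ∑ i, ∑ k,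
            ((M (I s i) k - Mk (I s i) k) * (Mk (I s i) k - Yk s i k)) := by
    simp only [hsi, Finset.sum_add_distrib, Finset.sum_sub_distrib, Finset.mul_sum]
    ring
  have horth := ortho (fun v k => M v k - Mk v k)
  have hsq : 0 ≤ ∑ s, ∑ i, ∑ k, (Y s i k - M (I s i) k + (Mk (I s i) k - Yk s i k)) ^ 2 :=
    Finset.sum_nonneg fun s _ => Finset.sum_nonneg fun i _ => Finset.sum_nonneg fun k _ =>
      sq_nonneg _
  have part2 : ∑ s, ∑ i, rowSq (Y s i - Yk s i)
      ≥ ∑ s, ((∑ i, rowSq (Y s i - Mk (I s i))) - ∑ i, rowSq (Y s i - M (I s i))) := by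
    rw [total, horth]
    linarith
  have hQ : 0 ≤ ∑ s, ∑ i, rowSq (Y s i - Yk s i) :=
    Finset.sum_nonneg fun s _ => Finset.sum_nonneg fun i _ =>
      Finset.sum_nonneg fun k _ => sq_nonneg _
  have hd : ℓ Y Mk - ℓ Y M
      = γ * ∑ s, ((∑ i, rowSq (Y s i - Mk (I s i))) - ∑ i, rowSq (Y s i - M (I s i))) := by
    rw [hℓ, hℓ, ← Finset.sum_sub_distrib, Finset.mul_sum]
    exact Finset.sum_congr rfl fun s _ => by ring
  refine ⟨?_, part2⟩
  rw [hd]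
  nlinarith [mul_le_mul_of_nonneg_left part2 hγ]
end

section
/- (Lower-level alternating-minimization convergence) Let ℓ(𝐘, M) = Σ_{s=1}^m [‖Y_s − F_s‖_F² + λ·tr(Y_sᵀL_sY_s) + γ‖Y_s − μ_s(M)‖_F²] with λ > 0, γ ≥ 0, L_s symmetric PSD, F_s fixed, where μ_s(M) selects rows of M via the index map I. Define the alternating sequence 𝐘^{(k)} = argmin_𝐘 ℓ(𝐘, M^{(k-1)}) and M^{(k)} = argmin_M ℓ(𝐘^{(k)}, M), from arbitrary initialization. Then lim_{k→∞} ℓ(𝐘^{(k)}, M^{(k)}) = inf_{𝐘,M} ℓ(𝐘, M). -/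
open Finset Filter

lemma rowSq_nonneg {d : ℕ} (x : Fin d → ℝ) : 0 ≤ rowSq x :=
  Finset.sum_nonneg fun _ _ => sq_nonneg _

section aux

variable {m n d : ℕ} {ns : Fin m → ℕ}

noncomputable def Nsq (D : (s : Fin m) → Fin (ns s) → Fin d → ℝ) : ℝ :=
  ∑ s, ∑ i, rowSq (D s i)

lemma Nsq_nonneg (D : (s : Fin m) → Fin (ns s) → Fin d → ℝ) : 0 ≤ Nsq D :=
  Finset.sum_nonneg fun _ _ => Finset.sum_nonneg fun _ _ => rowSq_nonneg _

lemma lap_nonneg {p : ℕ} (L : Matrix (Fin p) (Fin p) ℝ) (hL : L.PosSemidef)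
    (Y : Fin p → Fin d → ℝ) : 0 ≤ ∑ i, ∑ j, L i j * ∑ k, Y i k * Y j k := by
  have key : ∑ i, ∑ j, L i j * ∑ k, Y i k * Y j k
      = ∑ k : Fin d, ∑ i, ∑ j, L i j * (Y i k * Y j k) := by
    rw [show (∑ i, ∑ j, L i j * ∑ k, Y i k * Y j k)
        = ∑ i, ∑ k : Fin d, ∑ j, L i j * (Y i k * Y j k) from
      Finset.sum_congr rfl fun i _ => by
        simp only [Finset.mul_sum]; exact Finset.sum_comm]
    exact Finset.sum_comm
  rw [key]
  refine Finset.sum_nonneg fun k _ => ?_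
  have h2 := hL.dotProduct_mulVec_nonneg (fun i => Y i k)
  simp only [dotProduct, Matrix.mulVec, star_trivial] at h2
  calc (0:ℝ) ≤ _ := h2
  _ = _ := by
    simp only [dotProduct, Matrix.mulVec, Finset.mul_sum]
    exact Finset.sum_congr rfl fun i _ => Finset.sum_congr rfl fun j _ => by ring

-- quadratic expansion of a single subgraph term
lemma sq_sum_expand {p : ℕ} (A D F : Fin p → Fin d → ℝ) (t : ℝ) :
    ∑ i, rowSq (fun k => A i k + t * D i k - F i k)
      = (∑ i, rowSq (fun k => A i k - F i k))
        + t * (∑ i, ∑ k, 2 * (A i k - F i k) * D i k)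
        + t ^ 2 * ∑ i, rowSq (D i) := by
  unfold rowSq
  rw [Finset.mul_sum, Finset.mul_sum, ← Finset.sum_add_distrib, ← Finset.sum_add_distrib]
  refine Finset.sum_congr rfl fun i _ => ?_
  rw [Finset.mul_sum, Finset.mul_sum, ← Finset.sum_add_distrib, ← Finset.sum_add_distrib]
  exact Finset.sum_congr rfl fun k _ => by ring

lemma lap_sum_expand {p : ℕ} (L : Matrix (Fin p) (Fin p) ℝ) (A D : Fin p → Fin d → ℝ) (t : ℝ) :
    ∑ i, ∑ j, L i j * ∑ k, (A i k + t * D i k) * (A j k + t * D j k)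
      = (∑ i, ∑ j, L i j * ∑ k, A i k * A j k)
        + t * (∑ i, ∑ j, L i j * ∑ k, (A i k * D j k + D i k * A j k))
        + t ^ 2 * ∑ i, ∑ j, L i j * ∑ k, D i k * D j k := by
  simp only [Finset.mul_sum]
  rw [← Finset.sum_add_distrib, ← Finset.sum_add_distrib]
  refine Finset.sum_congr rfl fun i _ => ?_
  rw [← Finset.sum_add_distrib, ← Finset.sum_add_distrib]
  refine Finset.sum_congr rfl fun j _ => ?_
  rw [← Finset.sum_add_distrib, ← Finset.sum_add_distrib]
  exact Finset.sum_congr rfl fun k _ => by ring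

end aux
section threept

variable {m n d : ℕ} {ns : Fin m → ℕ} (I : (s : Fin m) → Fin (ns s) → Fin n)
  (Fs : (s : Fin m) → Fin (ns s) → Fin d → ℝ)
  (Ls : (s : Fin m) → Matrix (Fin (ns s)) (Fin (ns s)) ℝ) (lam γ : ℝ)

noncomputable def En (Y : (s : Fin m) → Fin (ns s) → Fin d → ℝ)
    (M : Fin n → Fin d → ℝ) : ℝ :=
  ∑ s, ((∑ i, rowSq (Y s i - Fs s i))
    + lam * (∑ i, ∑ j, Ls s i j * ∑ k, Y s i k * Y s j k)
    + γ * ∑ i, rowSq (Y s i - M (I s i)))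

lemma En_expand (M : Fin n → Fin d → ℝ) (A D : (s : Fin m) → Fin (ns s) → Fin d → ℝ)
    (t : ℝ) :
    En I Fs Ls lam γ (fun s i k => A s i k + t * D s i k) M
      = En I Fs Ls lam γ A M
        + t * (∑ s, ((∑ i, ∑ k, 2 * (A s i k - Fs s i k) * D s i k)
            + lam * (∑ i, ∑ j, Ls s i j * ∑ k, (A s i k * D s j k + D s i k * A s j k))
            + γ * ∑ i, ∑ k, 2 * (A s i k - M (I s i) k) * D s i k))
        + t ^ 2 * (∑ s, ((∑ i, rowSq (D s i))
            + lam * (∑ i, ∑ j, Ls s i j * ∑ k, D s i k * D s j k)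
            + γ * ∑ i, rowSq (D s i))) := by
  unfold En
  rw [Finset.mul_sum, Finset.mul_sum, ← Finset.sum_add_distrib, ← Finset.sum_add_distrib]
  refine Finset.sum_congr rfl fun s _ => ?_
  have e1 : ∀ G : Fin (ns s) → Fin d → ℝ,
      ∑ i, rowSq ((fun k => A s i k + t * D s i k) - G i)
        = (∑ i, rowSq (A s i - G i))
          + t * (∑ i, ∑ k, 2 * (A s i k - G i k) * D s i k)
          + t ^ 2 * ∑ i, rowSq (D s i) := by
    intro G
    have := sq_sum_expand (A s) (D s) G t
    convert this using 2 <;> · funext <;> simp [rowSq, Pi.sub_apply]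
  rw [e1 (fun i => Fs s i), e1 (fun i => M (I s i)), lap_sum_expand (Ls s) (A s) (D s) t]
  ring
end threept
section threept2
variable {m n d : ℕ} {ns : Fin m → ℕ} {I : (s : Fin m) → Fin (ns s) → Fin n}
  {Fs : (s : Fin m) → Fin (ns s) → Fin d → ℝ}
  {Ls : (s : Fin m) → Matrix (Fin (ns s)) (Fin (ns s)) ℝ} {lam γ : ℝ}

lemma threePoint (hLs : ∀ s, (Ls s).PosSemidef) (hlam : 0 ≤ lam) (hγ : 0 ≤ γ)
    (M : Fin n → Fin d → ℝ) (Ys : (s : Fin m) → Fin (ns s) → Fin d → ℝ)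
    (hmin : ∀ Y', En I Fs Ls lam γ Ys M ≤ En I Fs Ls lam γ Y' M)
    (Y : (s : Fin m) → Fin (ns s) → Fin d → ℝ) :
    En I Fs Ls lam γ Ys M + (1 + γ) * Nsq (fun s i k => Y s i k - Ys s i k)
      ≤ En I Fs Ls lam γ Y M := by
  set D : (s : Fin m) → Fin (ns s) → Fin d → ℝ := fun s i k => Y s i k - Ys s i k with hD
  set B : ℝ := ∑ s, ((∑ i, ∑ k, 2 * (Ys s i k - Fs s i k) * D s i k)
      + lam * (∑ i, ∑ j, Ls s i j * ∑ k, (Ys s i k * D s j k + D s i k * Ys s j k))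
      + γ * ∑ i, ∑ k, 2 * (Ys s i k - M (I s i) k) * D s i k) with hB
  set C : ℝ := ∑ s, ((∑ i, rowSq (D s i))
      + lam * (∑ i, ∑ j, Ls s i j * ∑ k, D s i k * D s j k)
      + γ * ∑ i, rowSq (D s i)) with hC
  have hexp : ∀ t : ℝ, En I Fs Ls lam γ (fun s i k => Ys s i k + t * D s i k) M
      = En I Fs Ls lam γ Ys M + t * B + t ^ 2 * C := fun t => En_expand I Fs Ls lam γ M Ys D t
  have hCge : (1 + γ) * Nsq D ≤ C := by
    rw [hC, Nsq, Finset.mul_sum]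
    refine Finset.sum_le_sum fun s _ => ?_
    have h1 : 0 ≤ ∑ i, ∑ j, Ls s i j * ∑ k, D s i k * D s j k := lap_nonneg (Ls s) (hLs s) (D s)
    nlinarith [Finset.sum_nonneg (fun i (_ : i ∈ Finset.univ) => rowSq_nonneg (D s i))]
  have hC0 : 0 ≤ C := le_trans (mul_nonneg (by linarith) (Nsq_nonneg D)) hCge
  have hkey : ∀ t : ℝ, 0 ≤ t * B + t ^ 2 * C := by
    intro t
    have := hmin (fun s i k => Ys s i k + t * D s i k)
    rw [hexp t] at this
    linarith
  have hB0 : 0 ≤ B := by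
    by_contra hB'
    push_neg at hB'
    set u : ℝ := -B / (C + 1) with hu
    have hCpos : (0:ℝ) < C + 1 := by linarith
    have huu : u * (C + 1) = -B := by rw [hu]; exact div_mul_cancel₀ _ hCpos.ne'
    have h2 : u * B + u ^ 2 * C = -(u ^ 2) := by linear_combination u * huu
    have h3 := hkey u
    rw [h2] at h3
    have hu0 : u = 0 := by nlinarith
    rw [hu0] at huu
    simp at huu
    linarith
  have hfin : En I Fs Ls lam γ (fun s i k => Ys s i k + 1 * D s i k) M = En I Fs Ls lam γ Y M := by
    congr 1
    funext s i k
    simp [hD]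
  have := hexp 1
  rw [hfin] at this
  rw [this]
  nlinarith
end threept2
section meanstuff
variable {m n d : ℕ} {ns : Fin m → ℕ}

def occ (I : (s : Fin m) → Fin (ns s) → Fin n) (v : Fin n) (s : Fin m) :
    Finset (Fin (ns s)) := Finset.univ.filter (fun i => I s i = v)

def cnt (I : (s : Fin m) → Fin (ns s) → Fin n) (v : Fin n) : ℕ :=
  ∑ s, (occ I v s).card

noncomputable def meanM (I : (s : Fin m) → Fin (ns s) → Fin n)
    (Y : (s : Fin m) → Fin (ns s) → Fin d → ℝ) (v : Fin n) (k : Fin d) : ℝ :=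
  (∑ s, ∑ i ∈ occ I v s, Y s i k) / (cnt I v)

variable {I : (s : Fin m) → Fin (ns s) → Fin n}

lemma group_by_v (f : (s : Fin m) → Fin (ns s) → ℝ) :
    ∑ s, ∑ i, f s i = ∑ v : Fin n, ∑ s, ∑ i ∈ occ I v s, f s i := by
  rw [Finset.sum_comm]
  refine Finset.sum_congr rfl fun s _ => ?_
  exact (Finset.sum_fiberwise Finset.univ (I s) (f s)).symm

lemma cnt_pos (hcover : ∀ v : Fin n, ∃ s i, I s i = v) (v : Fin n) :
    0 < cnt I v := by
  obtain ⟨s, i, hi⟩ := hcover v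
  have : 0 < (occ I v s).card := Finset.card_pos.2 ⟨i, by simp [occ, hi]⟩
  exact lt_of_lt_of_le this (Finset.single_le_sum (f := fun s => (occ I v s).card)
    (fun _ _ => Nat.zero_le _) (Finset.mem_univ s))

lemma mean_sum (hcover : ∀ v : Fin n, ∃ s i, I s i = v)
    (Y : (s : Fin m) → Fin (ns s) → Fin d → ℝ) (v : Fin n) (k : Fin d) :
    (cnt I v : ℝ) * meanM I Y v k = ∑ s, ∑ i ∈ occ I v s, Y s i k := by
  have hc : (cnt I v : ℝ) ≠ 0 := Nat.cast_ne_zero.2 (cnt_pos hcover v).ne'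
  rw [meanM, mul_div_cancel₀ _ hc]

-- variance decomposition per node & coordinate
lemma var_decomp (hcover : ∀ v : Fin n, ∃ s i, I s i = v)
    (Y : (s : Fin m) → Fin (ns s) → Fin d → ℝ) (v : Fin n) (k : Fin d) (mm : ℝ) :
    ∑ s, ∑ i ∈ occ I v s, (Y s i k - mm) ^ 2
      = (∑ s, ∑ i ∈ occ I v s, (Y s i k - meanM I Y v k) ^ 2)
        + (cnt I v : ℝ) * (meanM I Y v k - mm) ^ 2 := by
  have e1 : ∀ c : ℝ, ∑ s, ∑ i ∈ occ I v s, (Y s i k - c) ^ 2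
      = (∑ s, ∑ i ∈ occ I v s, (Y s i k) ^ 2)
        - 2 * c * (∑ s, ∑ i ∈ occ I v s, Y s i k) + (cnt I v : ℝ) * c ^ 2 := by
    intro c
    have e2 : ∀ s : Fin m, ∑ i ∈ occ I v s, (Y s i k - c) ^ 2
        = (∑ i ∈ occ I v s, (Y s i k) ^ 2)
          - 2 * c * (∑ i ∈ occ I v s, Y s i k) + ((occ I v s).card : ℝ) * c ^ 2 := by
      intro s
      rw [Finset.mul_sum, ← Finset.sum_sub_distrib]
      rw [show ((occ I v s).card : ℝ) * c ^ 2 = ∑ _i ∈ occ I v s, c ^ 2 by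
        rw [Finset.sum_const, nsmul_eq_mul]]
      rw [← Finset.sum_add_distrib]
      exact Finset.sum_congr rfl fun i _ => by ring
    rw [Finset.sum_congr rfl fun s _ => e2 s]
    rw [Finset.sum_add_distrib, Finset.sum_sub_distrib, ← Finset.mul_sum, ← Finset.sum_mul]
    congr 1
    rw [cnt]
    push_cast
    ring
  rw [e1 mm, e1 (meanM I Y v k)]
  have hms := mean_sum hcover Y v k
  linear_combination (2 * (mm - meanM I Y v k)) * hms
end meanstuff
section fourpt
variable {m n d : ℕ} {ns : Fin m → ℕ} {I : (s : Fin m) → Fin (ns s) → Fin n}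
  {Fs : (s : Fin m) → Fin (ns s) → Fin d → ℝ}
  {Ls : (s : Fin m) → Matrix (Fin (ns s)) (Fin (ns s)) ℝ} {lam γ : ℝ}

lemma rows_reindex (Y : (s : Fin m) → Fin (ns s) → Fin d → ℝ) (N : Fin n → Fin d → ℝ) :
    ∑ s, ∑ i, rowSq (Y s i - N (I s i))
      = ∑ v, ∑ k, ∑ s, ∑ i ∈ occ I v s, (Y s i k - N v k) ^ 2 := by
  rw [group_by_v (I := I) (f := fun s i => rowSq (Y s i - N (I s i)))]
  refine Finset.sum_congr rfl fun v _ => ?_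
  have step1 : ∀ s : Fin m, ∑ i ∈ occ I v s, rowSq (Y s i - N (I s i))
      = ∑ i ∈ occ I v s, ∑ k, (Y s i k - N v k) ^ 2 := by
    intro s
    refine Finset.sum_congr rfl fun i hi => ?_
    have hv : I s i = v := (Finset.mem_filter.1 hi).2
    simp [rowSq, hv]
  calc ∑ s, ∑ i ∈ occ I v s, rowSq (Y s i - N (I s i))
      = ∑ s, ∑ i ∈ occ I v s, ∑ k, (Y s i k - N v k) ^ 2 :=
        Finset.sum_congr rfl fun s _ => step1 s
    _ = ∑ s, ∑ k, ∑ i ∈ occ I v s, (Y s i k - N v k) ^ 2 :=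
        Finset.sum_congr rfl fun s _ => Finset.sum_comm
    _ = ∑ k, ∑ s, ∑ i ∈ occ I v s, (Y s i k - N v k) ^ 2 := Finset.sum_comm

lemma rows_decomp (hcover : ∀ v : Fin n, ∃ s i, I s i = v)
    (Y : (s : Fin m) → Fin (ns s) → Fin d → ℝ) (M' : Fin n → Fin d → ℝ) :
    ∑ s, ∑ i, rowSq (Y s i - M' (I s i))
      = (∑ s, ∑ i, rowSq (Y s i - meanM I Y (I s i)))
        + ∑ v, (cnt I v : ℝ) * rowSq (fun k => meanM I Y v k - M' v k) := by
  rw [rows_reindex Y M', rows_reindex Y (meanM I Y), ← Finset.sum_add_distrib]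
  refine Finset.sum_congr rfl fun v _ => ?_
  rw [show (cnt I v : ℝ) * rowSq (fun k => meanM I Y v k - M' v k)
      = ∑ k, (cnt I v : ℝ) * (meanM I Y v k - M' v k) ^ 2 by
    rw [rowSq, Finset.mul_sum]]
  rw [← Finset.sum_add_distrib]
  exact Finset.sum_congr rfl fun k _ => var_decomp hcover Y v k (M' v k)

lemma En_eq (Y : (s : Fin m) → Fin (ns s) → Fin d → ℝ) (M : Fin n → Fin d → ℝ) :
    En I Fs Ls lam γ Y M
      = (∑ s, ((∑ i, rowSq (Y s i - Fs s i))
          + lam * (∑ i, ∑ j, Ls s i j * ∑ k, Y s i k * Y s j k)))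
        + γ * ∑ s, ∑ i, rowSq (Y s i - M (I s i)) := by
  unfold En
  rw [Finset.mul_sum, ← Finset.sum_add_distrib]

lemma En_decomp (hcover : ∀ v : Fin n, ∃ s i, I s i = v)
    (Y : (s : Fin m) → Fin (ns s) → Fin d → ℝ) (M' : Fin n → Fin d → ℝ) :
    En I Fs Ls lam γ Y M'
      = En I Fs Ls lam γ Y (meanM I Y)
        + γ * ∑ v, (cnt I v : ℝ) * rowSq (fun k => meanM I Y v k - M' v k) := by
  rw [En_eq, En_eq, rows_decomp hcover Y M']
  ring

lemma mean_min (hcover : ∀ v : Fin n, ∃ s i, I s i = v) (hγ : 0 ≤ γ)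
    (Y : (s : Fin m) → Fin (ns s) → Fin d → ℝ) (M' : Fin n → Fin d → ℝ) :
    En I Fs Ls lam γ Y (meanM I Y) ≤ En I Fs Ls lam γ Y M' := by
  rw [En_decomp hcover Y M']
  have : 0 ≤ ∑ v, (cnt I v : ℝ) * rowSq (fun k => meanM I Y v k - M' v k) :=
    Finset.sum_nonneg fun v _ => mul_nonneg (Nat.cast_nonneg _) (rowSq_nonneg _)
  nlinarith

lemma min_eq_mean (hγ : 0 < γ) (hcover : ∀ v : Fin n, ∃ s i, I s i = v)
    (Y : (s : Fin m) → Fin (ns s) → Fin d → ℝ) (M₀ : Fin n → Fin d → ℝ)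
    (hmin : ∀ M', En I Fs Ls lam γ Y M₀ ≤ En I Fs Ls lam γ Y M') :
    ∀ v k, M₀ v k = meanM I Y v k := by
  have hd := En_decomp (I := I) (Fs := Fs) (Ls := Ls) (lam := lam) (γ := γ) hcover Y M₀
  have h1 := hmin (meanM I Y)
  have hT : ∑ v, (cnt I v : ℝ) * rowSq (fun k => meanM I Y v k - M₀ v k) ≤ 0 := by
    nlinarith
  have hTnn : ∀ v ∈ Finset.univ, (0:ℝ) ≤ (cnt I v : ℝ) * rowSq (fun k => meanM I Y v k - M₀ v k) :=
    fun v _ => mul_nonneg (Nat.cast_nonneg _) (rowSq_nonneg _)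
  have hT0 : ∀ v ∈ Finset.univ, (cnt I v : ℝ) * rowSq (fun k => meanM I Y v k - M₀ v k) = 0 :=
    (Finset.sum_eq_zero_iff_of_nonneg hTnn).1 (le_antisymm hT (Finset.sum_nonneg hTnn))
  intro v k
  have hcv : (0:ℝ) < (cnt I v : ℝ) := by exact_mod_cast cnt_pos hcover v
  have hrow : rowSq (fun k => meanM I Y v k - M₀ v k) = 0 := by
    have := hT0 v (Finset.mem_univ v)
    rcases mul_eq_zero.1 this with h | h
    · exact absurd h hcv.ne'
    · exact h
  have hterm : ∀ j ∈ Finset.univ, (0:ℝ) ≤ (meanM I Y v j - M₀ v j) ^ 2 := fun j _ => sq_nonneg _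
  have := (Finset.sum_eq_zero_iff_of_nonneg hterm).1 hrow k (Finset.mem_univ k)
  have := sq_eq_zero_iff.1 this
  linarith

lemma jensen_bound (hcover : ∀ v : Fin n, ∃ s i, I s i = v)
    (Y Z : (s : Fin m) → Fin (ns s) → Fin d → ℝ) :
    ∑ v, (cnt I v : ℝ) * rowSq (fun k => meanM I Y v k - meanM I Z v k)
      ≤ Nsq (fun s i k => Y s i k - Z s i k) := by
  have hNsq : Nsq (fun s i k => Y s i k - Z s i k)
      = ∑ v, ∑ k, ∑ s, ∑ i ∈ occ I v s, (Y s i k - Z s i k) ^ 2 := by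
    have := rows_reindex (I := I) (fun s i k => Y s i k - Z s i k) (fun _ _ => 0)
    simpa [Nsq, rowSq] using this
  rw [hNsq]
  refine Finset.sum_le_sum fun v _ => ?_
  rw [show (cnt I v : ℝ) * rowSq (fun k => meanM I Y v k - meanM I Z v k)
      = ∑ k, (cnt I v : ℝ) * (meanM I Y v k - meanM I Z v k) ^ 2 by
    rw [rowSq, Finset.mul_sum]]
  refine Finset.sum_le_sum fun k _ => ?_
  have hcv : (0:ℝ) < (cnt I v : ℝ) := by exact_mod_cast cnt_pos hcover v
  have hdiff : meanM I Y v k - meanM I Z v k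
      = (∑ s, ∑ i ∈ occ I v s, (Y s i k - Z s i k)) / (cnt I v : ℝ) := by
    rw [meanM, meanM, div_sub_div_same]
    congr 1
    rw [← Finset.sum_sub_distrib]
    exact Finset.sum_congr rfl fun s _ => (Finset.sum_sub_distrib _ _).symm
  have hcs : (∑ s, ∑ i ∈ occ I v s, (Y s i k - Z s i k)) ^ 2
      ≤ (cnt I v : ℝ) * ∑ s, ∑ i ∈ occ I v s, (Y s i k - Z s i k) ^ 2 := by
    rw [Finset.sum_sigma' Finset.univ (fun s => occ I v s) (fun s i => Y s i k - Z s i k),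
      Finset.sum_sigma' Finset.univ (fun s => occ I v s) (fun s i => (Y s i k - Z s i k) ^ 2)]
    have hcard : ((Finset.univ.sigma fun s => occ I v s).card : ℝ) = (cnt I v : ℝ) := by
      rw [Finset.card_sigma, cnt]
    calc (∑ x ∈ Finset.univ.sigma fun s => occ I v s, (Y x.1 x.2 k - Z x.1 x.2 k)) ^ 2
        ≤ ((Finset.univ.sigma fun s => occ I v s).card : ℝ)
          * ∑ x ∈ Finset.univ.sigma fun s => occ I v s, (Y x.1 x.2 k - Z x.1 x.2 k) ^ 2 :=
          sq_sum_le_card_mul_sum_sq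
      _ = _ := by rw [hcard]
  rw [hdiff, div_pow]
  have heq : (cnt I v : ℝ) * ((∑ s, ∑ i ∈ occ I v s, (Y s i k - Z s i k)) ^ 2 / (cnt I v : ℝ) ^ 2)
      = (∑ s, ∑ i ∈ occ I v s, (Y s i k - Z s i k)) ^ 2 / (cnt I v : ℝ) := by
    field_simp
  rw [heq, div_le_iff₀ hcv]
  calc (∑ s, ∑ i ∈ occ I v s, (Y s i k - Z s i k)) ^ 2
      ≤ (cnt I v : ℝ) * ∑ s, ∑ i ∈ occ I v s, (Y s i k - Z s i k) ^ 2 := hcs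
    _ = (∑ s, ∑ i ∈ occ I v s, (Y s i k - Z s i k) ^ 2) * (cnt I v : ℝ) := by ring

lemma fourPoint (hcover : ∀ v : Fin n, ∃ s i, I s i = v) (hγ : 0 ≤ γ)
    (Z : (s : Fin m) → Fin (ns s) → Fin d → ℝ) (Mk : Fin n → Fin d → ℝ)
    (hmin : ∀ M', En I Fs Ls lam γ Z Mk ≤ En I Fs Ls lam γ Z M')
    (Y : (s : Fin m) → Fin (ns s) → Fin d → ℝ) :
    En I Fs Ls lam γ Y Mk
      ≤ En I Fs Ls lam γ Y (meanM I Y) + γ * Nsq (fun s i k => Y s i k - Z s i k) := by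
  rcases eq_or_lt_of_le hγ with h0 | hpos
  · rw [En_decomp hcover Y Mk, ← h0]
    simp
  · have hMk : ∀ v k, Mk v k = meanM I Z v k := min_eq_mean hpos hcover Z Mk hmin
    rw [En_decomp hcover Y Mk]
    have : ∑ v, (cnt I v : ℝ) * rowSq (fun k => meanM I Y v k - Mk v k)
        = ∑ v, (cnt I v : ℝ) * rowSq (fun k => meanM I Y v k - meanM I Z v k) := by
      refine Finset.sum_congr rfl fun v _ => ?_
      have hfe : (fun k => meanM I Y v k - Mk v k)
          = fun k => meanM I Y v k - meanM I Z v k := by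
        funext k; rw [hMk v k]
      rw [hfe]
    rw [this]
    have := jensen_bound (I := I) hcover Y Z
    nlinarith
end fourpt
section nonneg
variable {m n d : ℕ} {ns : Fin m → ℕ} {I : (s : Fin m) → Fin (ns s) → Fin n}
  {Fs : (s : Fin m) → Fin (ns s) → Fin d → ℝ}
  {Ls : (s : Fin m) → Matrix (Fin (ns s)) (Fin (ns s)) ℝ} {lam γ : ℝ}

lemma En_nonneg (hLs : ∀ s, (Ls s).PosSemidef) (hlam : 0 ≤ lam) (hγ : 0 ≤ γ)
    (Y : (s : Fin m) → Fin (ns s) → Fin d → ℝ) (M : Fin n → Fin d → ℝ) :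
    0 ≤ En I Fs Ls lam γ Y M := by
  refine Finset.sum_nonneg fun s _ => ?_
  have h1 : 0 ≤ ∑ i, rowSq (Y s i - Fs s i) :=
    Finset.sum_nonneg fun i _ => rowSq_nonneg _
  have h2 : 0 ≤ ∑ i, ∑ j, Ls s i j * ∑ k, Y s i k * Y s j k :=
    lap_nonneg (Ls s) (hLs s) (Y s)
  have h3 : 0 ≤ ∑ i, rowSq (Y s i - M (I s i)) :=
    Finset.sum_nonneg fun i _ => rowSq_nonneg _
  have := mul_nonneg hlam h2
  have := mul_nonneg hγ h3
  linarith
end nonneg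

/-- lower-level alternating-minimization convergence: exact
alternating minimization of `ℓ_muse` over `𝐘` and `M` drives the energy to its
infimum. -/
theorem stmt9 {m n d : ℕ} (ns : Fin m → ℕ)
    (I : (s : Fin m) → Fin (ns s) → Fin n)
    (Fs : (s : Fin m) → Fin (ns s) → Fin d → ℝ)
    (Ls : (s : Fin m) → Matrix (Fin (ns s)) (Fin (ns s)) ℝ)
    (hLs : ∀ s, (Ls s).PosSemidef)
    (lam γ : ℝ) (hlam : 0 < lam) (hγ : 0 ≤ γ)
    (hcover : ∀ v : Fin n, ∃ s i, I s i = v)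
    (ℓ : ((s : Fin m) → Fin (ns s) → Fin d → ℝ) → (Fin n → Fin d → ℝ) → ℝ)
    (hℓ : ∀ Y M, ℓ Y M = ∑ s,
      ((∑ i, rowSq (Y s i - Fs s i))
        + lam * (∑ i, ∑ j, Ls s i j * ∑ k, Y s i k * Y s j k)
        + γ * ∑ i, rowSq (Y s i - M (I s i))))
    (Yseq : ℕ → (s : Fin m) → Fin (ns s) → Fin d → ℝ)
    (Mseq : ℕ → Fin n → Fin d → ℝ)
    -- alternating exact minimization, from arbitrary initialization
    (hY : ∀ k, ∀ Y', ℓ (Yseq (k + 1)) (Mseq k) ≤ ℓ Y' (Mseq k))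
    (hM : ∀ k, ∀ M', ℓ (Yseq (k + 1)) (Mseq (k + 1)) ≤ ℓ (Yseq (k + 1)) M') :
    Tendsto (fun k => ℓ (Yseq k) (Mseq k)) atTop
      (nhds (sInf (Set.range
        (fun p : ((s : Fin m) → Fin (ns s) → Fin d → ℝ) × (Fin n → Fin d → ℝ) =>
          ℓ p.1 p.2)))) := by
  have hE : ∀ Y M, ℓ Y M = En I Fs Ls lam γ Y M := fun Y M => by rw [hℓ]; rfl
  set g : ((s : Fin m) → Fin (ns s) → Fin d → ℝ) × (Fin n → Fin d → ℝ) → ℝ :=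
    fun p => ℓ p.1 p.2 with hg
  set S : ℝ := sInf (Set.range g) with hS
  set a : ℕ → ℝ := fun k => ℓ (Yseq k) (Mseq k) with ha
  have hrange_ne : (Set.range g).Nonempty := ⟨g (Yseq 0, Mseq 0), ⟨_, rfl⟩⟩
  have hbdd : BddBelow (Set.range g) := by
    refine ⟨0, fun x hx => ?_⟩
    obtain ⟨p, rfl⟩ := hx
    rw [hg]
    simp only
    rw [hE]
    exact En_nonneg hLs hlam.le hγ _ _
  have hSle : ∀ k, S ≤ a k := fun k => csInf_le hbdd ⟨(Yseq k, Mseq k), rfl⟩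
  have hanti : Antitone a := antitone_nat_of_succ_le fun k =>
    le_trans (hM k (Mseq k)) (hY k (Yseq k))
  rw [Metric.tendsto_atTop]
  intro ε hε
  obtain ⟨x, hxmem, hx⟩ := Real.lt_sInf_add_pos hrange_ne (half_pos hε)
  obtain ⟨p, rfl⟩ := hxmem
  -- c0: value at (p.1, mean), below S + ε/2
  set c0 : ℝ := En I Fs Ls lam γ p.1 (meanM I p.1) with hc0def
  have hc0 : c0 < S + ε / 2 := by
    have h1 : c0 ≤ En I Fs Ls lam γ p.1 p.2 := mean_min hcover hγ p.1 p.2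
    have h2 : En I Fs Ls lam γ p.1 p.2 < S + ε / 2 := by rw [← hE]; exact hx
    linarith
  -- key claim: some tail index K with a K < S + ε
  have hclaim : ∃ K, a K < S + ε := by
    by_contra hcon
    push_neg at hcon
    set ψ : ℕ → ℝ := fun j =>
      (1 + γ) * Nsq (fun s i k => p.1 s i k - Yseq (j + 1) s i k) with hψ
    have hψnn : ∀ j, 0 ≤ ψ j := fun j =>
      mul_nonneg (by linarith) (Nsq_nonneg _)
    have hstep : ∀ j, ψ (j + 1) ≤ ψ j - ε / 2 := by
      intro j
      have hMmin : ∀ M', En I Fs Ls lam γ (Yseq (j + 1)) (Mseq (j + 1))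
          ≤ En I Fs Ls lam γ (Yseq (j + 1)) M' := by
        intro M'; rw [← hE, ← hE]; exact hM j M'
      have four := fourPoint hcover hγ (Yseq (j + 1)) (Mseq (j + 1)) hMmin p.1
      have hYmin : ∀ Y', En I Fs Ls lam γ (Yseq (j + 2)) (Mseq (j + 1))
          ≤ En I Fs Ls lam γ Y' (Mseq (j + 1)) := by
        intro Y'; rw [← hE, ← hE]; exact hY (j + 1) Y'
      have three := threePoint hLs hlam.le hγ (Mseq (j + 1)) (Yseq (j + 2)) hYmin p.1
      have hstep1 : a (j + 2) ≤ En I Fs Ls lam γ (Yseq (j + 2)) (Mseq (j + 1)) := by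
        rw [ha]; simp only; rw [hE]
        rw [← hE, ← hE]
        exact hM (j + 1) (Mseq (j + 1))
      have hbig := hcon (j + 2)
      have hN1 : 0 ≤ Nsq (fun s i k => p.1 s i k - Yseq (j + 1) s i k) := Nsq_nonneg _
      have hγN : γ * Nsq (fun s i k => p.1 s i k - Yseq (j + 1) s i k)
          ≤ (1 + γ) * Nsq (fun s i k => p.1 s i k - Yseq (j + 1) s i k) := by nlinarith
      rw [hψ]
      simp only
      rw [show j + 1 + 1 = j + 2 from rfl]
      linarith
    have hdesc : ∀ T : ℕ, ψ T + T * (ε / 2) ≤ ψ 0 := by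
      intro T
      induction T with
      | zero => simp
      | succ T ih =>
        have := hstep T
        push_cast
        push_cast at ih
        linarith
    obtain ⟨T, hT⟩ := exists_nat_gt (ψ 0 / (ε / 2))
    have hT2 : ψ 0 < T * (ε / 2) := by
      rw [div_lt_iff₀ (half_pos hε)] at hT
      linarith
    have := hdesc T
    have := hψnn T
    linarith
  obtain ⟨K, hK⟩ := hclaim
  refine ⟨K, fun nn hnn => ?_⟩
  have h1 : a nn ≤ a K := hanti hnn
  have h2 : S ≤ a nn := hSle nn
  rw [Real.dist_eq, abs_of_nonneg (by linarith)]
  linarith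
end
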